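/- arXiv:2203.01718 — 3 statements merged into one kernel-verified Lean document; each statement's English description precedes it below -/
import Mathlib

section
/- Let K, T ⊂ ℝ^n be convex bodies, where T is additionally strictly convex and smooth. Let q = (q_1,...,q_m) be a closed (K,T)-Minkowski billiard trajectory with closed dual billiard trajectory p = (p_1,...,p_m) in T. Then p is a closed (T,−K)-Minkowski billiard trajectory with −q^{+1} := (−q_2,...,−q_m,−q_1) as its closed dual billiard trajectory on −K. -/
open scoped RealInnerProductSpace
open MeasureTheory Filter Metric

noncomputable section

/-- `ℝ^n` as a Euclidean space. -/
abbrev Evec (n : ℕ) : Type := EuclideanSpace ℝ (Fin n)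

/-- `ℝ^{2n} = ℝ^n_q × ℝ^n_p` as a Euclidean space. -/
abbrev E2vec (n : ℕ) : Type := EuclideanSpace ℝ (Fin n ⊕ Fin n)

/-- A convex body: a compact convex set with the origin in its interior. -/
def IsConvexBody {n : ℕ} (K : Set (Evec n)) : Prop :=
  IsCompact K ∧ Convex ℝ K ∧ 0 ∈ interior K

/-- A convex polytope: the convex hull of finitely many points. -/
def IsPolytope {n : ℕ} (K : Set (Evec n)) : Prop :=
  ∃ s : Finset (Evec n), K = convexHull ℝ (s : Set (Evec n))

/-- The polar body `T° = {x : ⟨x,y⟩ ≤ 1 ∀ y ∈ T}`. -/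
def polarSet {n : ℕ} (T : Set (Evec n)) : Set (Evec n) :=
  {x | ∀ y ∈ T, ⟪x, y⟫ ≤ 1}

/-- The outer normal cone `N_T(p)`. -/
def outerNormalCone {n : ℕ} (T : Set (Evec n)) (p : Evec n) : Set (Evec n) :=
  {u | ∀ y ∈ T, ⟪u, y - p⟫ ≤ 0}

/-- A body is smooth if through every boundary point there is a unique supporting
hyperplane, i.e. a unique unit outer normal vector. -/
def IsSmoothBody {n : ℕ} (T : Set (Evec n)) : Prop :=
  ∀ z ∈ frontier T, ∀ u ∈ outerNormalCone T z, ∀ v ∈ outerNormalCone T z,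
    ‖u‖ = 1 → ‖v‖ = 1 → u = v

/-- Closed polygonal curve with `m` cyclically indexed vertices: consecutive vertices are
distinct and no vertex lies on the segment joining its neighbours. -/
def IsClosedPolygonal {n : ℕ} (m : ℕ) (q : ZMod m → Evec n) : Prop :=
  2 ≤ m ∧ (∀ j, q (j + 1) ≠ q j) ∧ ∀ j, q j ∉ segment ℝ (q (j - 1)) (q (j + 1))

/-- The `ℓ_T`-length of a closed polygonal curve: `Σ_j μ_{T°}(q_{j+1} - q_j)`. -/
def ellLen {n : ℕ} (T : Set (Evec n)) : (m : ℕ) → (ZMod m → Evec n) → ℝ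
  | 0, _ => 0
  | (m + 1), q => ∑ j : ZMod (m + 1), gauge (polarSet T) (q (j + 1) - q j)

/-- `q` is a closed (strong) `(K,T)`-Minkowski billiard trajectory with dual trajectory `p`. -/
def IsBilliardPair {n : ℕ} (K T : Set (Evec n)) (m : ℕ) (q p : ZMod m → Evec n) : Prop :=
  IsClosedPolygonal m q ∧ (∀ j, q j ∈ frontier K) ∧ (∀ j, p j ∈ frontier T) ∧
    ∀ j, q (j + 1) - q j ∈ outerNormalCone T (p j) ∧
      -(p (j + 1) - p j) ∈ outerNormalCone K (q (j + 1))

/-- `q` is a closed (strong) `(K,T)`-Minkowski billiard trajectory. -/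
def IsClosedTrajectory {n : ℕ} (K T : Set (Evec n)) (m : ℕ) (q : ZMod m → Evec n) : Prop :=
  ∃ p, IsBilliardPair K T m q p

/-- `q` is an `ℓ_T`-minimizing closed `(K,T)`-Minkowski billiard trajectory. -/
def IsMinTrajectory {n : ℕ} (K T : Set (Evec n)) (m : ℕ) (q : ZMod m → Evec n) : Prop :=
  IsClosedTrajectory K T m q ∧
    ∀ (m' : ℕ) (q' : ZMod m' → Evec n), IsClosedTrajectory K T m' q' →
      ellLen T m q ≤ ellLen T m' q'

/-- Membership in `F^cp_{n+1}(K)`: a closed polygonal curve with at most `n+1` vertices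
that cannot be translated into the interior of `K`. -/
def InFcp {n : ℕ} (K : Set (Evec n)) (m : ℕ) (q : ZMod m → Evec n) : Prop :=
  IsClosedPolygonal m q ∧ m ≤ n + 1 ∧ ∀ v : Evec n, ∃ j, q j + v ∉ interior K

/-- The set of values `ℓ_T(q)` for `q ∈ F^cp_{n+1}(K)`. -/
def FcpVals {n : ℕ} (K T : Set (Evec n)) : Set ℝ :=
  {v | ∃ (m : ℕ) (q : ZMod m → Evec n), InFcp K m q ∧ ellLen T m q = v}

/-- The set of values `ℓ_T(q)` for `q ∈ M_{n+1}(K,T)`, the closed `(K,T)`-Minkowski billiard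
trajectories with at most `n+1` bouncing points. -/
def MVals {n : ℕ} (K T : Set (Evec n)) : Set ℝ :=
  {v | ∃ (m : ℕ) (q : ZMod m → Evec n),
    m ≤ n + 1 ∧ IsClosedTrajectory K T m q ∧ ellLen T m q = v}

/-- The set of values `ℓ_T(q)` over all closed `(K,T)`-Minkowski billiard trajectories. -/
def TrajVals {n : ℕ} (K T : Set (Evec n)) : Set ℝ :=
  {v | ∃ (m : ℕ) (q : ZMod m → Evec n), IsClosedTrajectory K T m q ∧ ellLen T m q = v}

/-- A closed polygonal curve viewed as a compact subset of `ℝ^n`. -/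
def curveSet {n : ℕ} (m : ℕ) (q : ZMod m → Evec n) : Set (Evec n) :=
  ⋃ j : ZMod m, segment ℝ (q j) (q (j + 1))

/-- The `q`-part of a point of `ℝ^{2n}`. -/
def qPart {n : ℕ} (x : E2vec n) : Evec n := WithLp.toLp 2 (fun i => x (Sum.inl i))

/-- The `p`-part of a point of `ℝ^{2n}`. -/
def pPart {n : ℕ} (x : E2vec n) : Evec n := WithLp.toLp 2 (fun i => x (Sum.inr i))

/-- The point `(a, b)` of `ℝ^{2n}`. -/
def prodPt {n : ℕ} (a b : Evec n) : E2vec n := WithLp.toLp 2 (Sum.elim a b)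

/-- The Lagrangian product `K × T ⊂ ℝ^n_q × ℝ^n_p`. -/
def lagProd {n : ℕ} (K T : Set (Evec n)) : Set (E2vec n) :=
  {x | qPart x ∈ K ∧ pPart x ∈ T}

/-- The standard symplectic matrix: `J(q, p) = (p, -q)`. -/
def symJ {n : ℕ} (x : E2vec n) : E2vec n := prodPt (pPart x) (-qPart x)

/-- The Hamiltonian `H_C = ½ μ_C²` where `μ_C` is the Minkowski functional (gauge) of `C`. -/
def Ham {V : Type*} [AddCommGroup V] [Module ℝ V] (C : Set V) (x : V) : ℝ :=
  (1 / 2) * gauge C x ^ 2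

/-- The convex subdifferential of `f` at `x`. -/
def subdiff {V : Type*} [NormedAddCommGroup V] [InnerProductSpace ℝ V]
    (f : V → ℝ) (x : V) : Set V :=
  {v | ∀ y, f x + ⟪v, y - x⟫ ≤ f y}

/-- A closed characteristic on `∂C`: an absolutely continuous 1-periodic loop
(encoded as the indefinite integral of a locally integrable derivative `x'`) with
`H_C ∘ x ≡ ½` and `x'(t) ∈ J ∂H_C(x(t))` for almost every `t`. -/
structure ClosedCharacteristic (n : ℕ) (C : Set (E2vec n)) where
  x : ℝ → E2vec n
  x' : ℝ → E2vec n
  periodic : Function.Periodic x 1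
  periodic' : Function.Periodic x' 1
  integrable : IntegrableOn x' (Set.Icc (0 : ℝ) 1)
  eq_integral : ∀ t : ℝ, x t = x 0 + ∫ s in (0 : ℝ)..t, x' s
  energy : ∀ t : ℝ, Ham C (x t) = 1 / 2
  mem_incl : ∀ᵐ t ∂(volume : Measure ℝ), x' t ∈ symJ '' subdiff (Ham C) (x t)

/-- The action `𝔸(x) = -½ ∫₀¹ ⟨Jẋ(t), x(t)⟩ dt` of a closed characteristic. -/
def charAction {n : ℕ} {C : Set (E2vec n)} (c : ClosedCharacteristic n C) : ℝ :=
  -(1 / 2) * ∫ t in (0 : ℝ)..1, ⟪symJ (c.x' t), c.x t⟫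

/-- The set of actions of closed characteristics on `∂C`. -/
def charActions (n : ℕ) (C : Set (E2vec n)) : Set ℝ :=
  {a | ∃ c : ClosedCharacteristic n C, charAction c = a}

/-- The EHZ capacity `c_EHZ(C) = min {𝔸(x) : x closed characteristic on ∂C}`. -/
def cEHZ (n : ℕ) (C : Set (E2vec n)) : ℝ := sInf (charActions n C)

/-- An action-minimizing closed characteristic. -/
def IsMinChar {n : ℕ} {C : Set (E2vec n)} (c : ClosedCharacteristic n C) : Prop :=
  ∀ c' : ClosedCharacteristic n C, charAction c ≤ charAction c'

/-- The `k`-th node of the closed polygonal curve in `ℝ^{2n}` associated to a billiard pair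
`(q, p)`: node `2j` is `(q_j, p_j)` and node `2j+1` is `(q_{j+1}, p_j)`. -/
def polyNode {n : ℕ} (m : ℕ) (q p : ZMod m → Evec n) (k : ℕ) : E2vec n :=
  if k % 2 = 0 then prodPt (q ((k / 2 : ℕ) : ZMod m)) (p ((k / 2 : ℕ) : ZMod m))
  else prodPt (q (((k / 2 : ℕ) : ZMod m) + 1)) (p ((k / 2 : ℕ) : ZMod m))

/-- The loop `x : ℝ → ℝ^{2n}` successively traverses (over the period `[0,1]`) the straight
segments from `(q_j, p_j)` to `(q_{j+1}, p_j)` and from `(q_{j+1}, p_j)` to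
`(q_{j+1}, p_{j+1})`; in particular it is a closed polygonal curve. -/
def TraversesBilliard {n : ℕ} (x : ℝ → E2vec n) (m : ℕ) (q p : ZMod m → Evec n) : Prop :=
  ∃ τ : ℕ → ℝ, Monotone τ ∧ τ 0 = 0 ∧ τ (2 * m) = 1 ∧
    ∀ k < 2 * m, x (τ k) = polyNode m q p k ∧ x (τ (k + 1)) = polyNode m q p (k + 1) ∧
      ∀ t ∈ Set.Icc (τ k) (τ (k + 1)),
        x t ∈ segment ℝ (polyNode m q p k) (polyNode m q p (k + 1))

/-- The closed polygonal curve `(q_{f 0}, ..., q_{f n})` selected from `q` by `f`. -/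
def selCurve {n : ℕ} (m : ℕ) (q : ZMod m → Evec n) (f : Fin (n + 1) → ZMod m) :
    ZMod (n + 1) → Evec n :=
  fun k => q (f ⟨ZMod.val k, ZMod.val_lt k⟩)

lemma coneSmul {n : ℕ} {T : Set (Evec n)} {z u : Evec n} (hu : u ∈ outerNormalCone T z)
    {c : ℝ} (hc : 0 ≤ c) : c • u ∈ outerNormalCone T z := by
  intro y hy
  rw [real_inner_smul_left]
  exact mul_nonpos_of_nonneg_of_nonpos hc (hu y hy)

lemma normalDir {n : ℕ} {T : Set (Evec n)} (hTsm : IsSmoothBody T) {z u v : Evec n}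
    (hz : z ∈ frontier T) (hu : u ∈ outerNormalCone T z) (hv : v ∈ outerNormalCone T z)
    (hu0 : u ≠ 0) (hv0 : v ≠ 0) : ∃ c : ℝ, 0 < c ∧ v = c • u := by
  have hnu : ‖u‖ ≠ 0 := norm_ne_zero_iff.mpr hu0
  have hnv : ‖v‖ ≠ 0 := norm_ne_zero_iff.mpr hv0
  have h1 : ‖u‖⁻¹ • u ∈ outerNormalCone T z := coneSmul hu (by positivity)
  have h2 : ‖v‖⁻¹ • v ∈ outerNormalCone T z := coneSmul hv (by positivity)
  have heq := hTsm z hz _ h1 _ h2 (norm_smul_inv_norm hu0) (norm_smul_inv_norm hv0)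
  refine ⟨‖v‖ * ‖u‖⁻¹, by positivity, ?_⟩
  rw [← smul_smul, heq, smul_smul]
  field_simp
  rw [one_smul]

lemma memSegOfProp {n : ℕ} {x y z : Evec n} {c : ℝ} (hc : 0 < c)
    (h : z - y = c • (y - x)) : y ∈ segment ℝ x z := by
  rw [sub_eq_iff_eq_add] at h
  refine ⟨c / (1 + c), 1 / (1 + c), by positivity, by positivity, ?_, ?_⟩
  · field_simp
    ring
  · rw [h]
    match_scalars <;> field_simp <;> ring

lemma negMemFrontierNeg {n : ℕ} {K : Set (Evec n)} {x : Evec n} (hx : x ∈ frontier K) :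
    -x ∈ frontier (-K) := by
  have h1 : (-K : Set (Evec n)) = (Homeomorph.neg (Evec n)) ⁻¹' K := rfl
  rw [h1, ← Homeomorph.preimage_frontier]
  simpa using hx

/-- Proposition 2.2: if `T` is strictly convex and smooth and `q` is a
closed `(K,T)`-Minkowski billiard trajectory with dual trajectory `p`, then `p` is a closed
`(T,-K)`-Minkowski billiard trajectory with `-q^{+1} = (-q_2, ..., -q_m, -q_1)` as its closed
dual billiard trajectory on `-K`. -/
theorem dual_is_trajectory {n : ℕ} (K T : Set (Evec n))
    (hK : IsConvexBody K) (hT : IsConvexBody T)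
    (hTs : StrictConvex ℝ T) (hTsm : IsSmoothBody T)
    (m : ℕ) (q p : ZMod m → Evec n) (h : IsBilliardPair K T m q p) :
    IsBilliardPair T (-K) m p (fun j => -q (j + 1)) := by
  obtain ⟨⟨hm, hne, hseg⟩, hqK, hpT, hN⟩ := h
  have hTclosed : IsClosed T := hT.1.isClosed
  -- key: equal dual points force proportional chords
  have key : ∀ i k : ZMod m, p i = p k →
      ∃ c : ℝ, 0 < c ∧ q (k + 1) - q k = c • (q (i + 1) - q i) := by
    intro i k hik
    have hu : q (i + 1) - q i ∈ outerNormalCone T (p i) := (hN i).1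
    have hv : q (k + 1) - q k ∈ outerNormalCone T (p i) := hik ▸ (hN k).1
    exact normalDir hTsm (hpT i) hu hv (sub_ne_zero.mpr (hne i)) (sub_ne_zero.mpr (hne k))
  -- equal dual points at j and j+1 give a contradiction via polygonality of q
  have keyc : ∀ j : ZMod m, p j ≠ p (j + 1) := by
    intro j hpe
    obtain ⟨c, hc, hprop⟩ := key j (j + 1) hpe
    have : q (j + 1) ∈ segment ℝ (q j) (q (j + 1 + 1)) := memSegOfProp hc hprop
    have h2 := hseg (j + 1)
    rw [add_sub_cancel_right] at h2
    exact h2 this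
  refine ⟨⟨hm, ?_, ?_⟩, hpT, ?_, ?_⟩
  · exact fun j => fun hpe => keyc j hpe.symm
  · -- p j not on segment [p (j-1), p (j+1)]
    intro j hmem
    obtain ⟨a, b, ha, hb, hab, heq⟩ := hmem
    by_cases hpe : p (j - 1) = p (j + 1)
    · rw [hpe, ← add_smul, hab, one_smul] at heq
      exact keyc j heq.symm
    · rcases eq_or_lt_of_le ha with ha0 | ha0
      · rw [← ha0, zero_add] at hab
        rw [← ha0, zero_smul, zero_add, hab, one_smul] at heq
        exact keyc j heq.symm
      rcases eq_or_lt_of_le hb with hb0 | hb0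
      · rw [← hb0, add_zero] at hab
        rw [← hb0, zero_smul, add_zero, hab, one_smul] at heq
        obtain ⟨c, hc, hprop⟩ := key (j - 1) j heq
        rw [sub_add_cancel] at hprop
        exact hseg j (memSegOfProp hc hprop)
      · have hmem1 : p (j - 1) ∈ T := hTclosed.frontier_subset (hpT (j - 1))
        have hmem2 : p (j + 1) ∈ T := hTclosed.frontier_subset (hpT (j + 1))
        have hint : p j ∈ interior T := heq ▸ hTs hmem1 hmem2 hpe ha0 hb0 hab
        exact ((hpT j).2) hint
  · intro j
    exact negMemFrontierNeg (hqK (j + 1))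
  · intro j
    constructor
    · -- p (j+1) - p j ∈ N_{-K}(-q(j+1))
      intro y hy
      have hz : -y ∈ K := hy
      have := ((hN j).2) (-y) hz
      have h2 : ⟪p (j + 1) - p j, y - -q (j + 1)⟫ = ⟪-(p (j + 1) - p j), -y - q (j + 1)⟫ := by
        rw [inner_neg_left, ← inner_neg_right]
        congr 1
        abel
      rw [h2]
      exact this
    · -- -(-q(j+2) - -q(j+1)) = q(j+2) - q(j+1) ∈ N_T(p(j+1))
      show -(-q (j + 1 + 1) - -q (j + 1)) ∈ outerNormalCone T (p (j + 1))
      have h2 : -(-q (j + 1 + 1) - -q (j + 1)) = q (j + 1 + 1) - q (j + 1) := by abel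
      rw [h2]
      exact (hN (j + 1)).1
end
end

section
/- Let K, T ⊂ ℝ^n be convex bodies and let q = (q_1,...,q_m) be a closed (K,T)-Minkowski billiard trajectory with closed dual billiard trajectory p = (p_1,...,p_m). Then q cannot be translated into the interior of K and p cannot be translated into the interior of T, i.e., q ∈ F(K) and p ∈ F(T). -/
open scoped RealInnerProductSpace
open MeasureTheory Filter Metric

noncomputable section

private lemma normal_strict {n : ℕ} {K : Set (Evec n)} {x u z : Evec n}
    (hu : u ∈ outerNormalCone K x) (hu0 : u ≠ 0) (hz : z ∈ interior K) :
    ⟪u, z - x⟫ < 0 := by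
  rcases Metric.mem_nhds_iff.mp (mem_interior_iff_mem_nhds.mp hz) with ⟨ε, hε, hball⟩
  have hun : 0 < ‖u‖ := norm_pos_iff.mpr hu0
  set δ := ε / (2 * ‖u‖) with hδ
  have hδpos : 0 < δ := by positivity
  have hmem : z + δ • u ∈ K := by
    apply hball
    have : dist (z + δ • u) z = δ * ‖u‖ := by
      rw [dist_eq_norm, add_sub_cancel_left, norm_smul, Real.norm_eq_abs,
        abs_of_pos hδpos]
    rw [Metric.mem_ball, this, hδ]
    have h3 : ε / (2 * ‖u‖) * ‖u‖ = ε / 2 := by field_simp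
    rw [h3]; linarith
  have h2 := hu _ hmem
  have hexp : ⟪u, z + δ • u - x⟫ = ⟪u, z - x⟫ + δ * ‖u‖ ^ 2 := by
    have : z + δ • u - x = (z - x) + δ • u := by abel
    rw [this, inner_add_right, real_inner_smul_right, real_inner_self_eq_norm_sq]
  nlinarith [h2, hexp, mul_pos hδpos (pow_pos hun 2)]

private lemma sum_shift {m : ℕ} [NeZero m] {V : Type*} [AddCommGroup V] (f : ZMod m → V) :
    ∑ j : ZMod m, f (j + 1) = ∑ j : ZMod m, f j :=
  Fintype.sum_equiv (Equiv.addRight (1 : ZMod m)) _ _ (fun _ => rfl)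

private lemma zmod_const {m : ℕ} [NeZero m] {V : Type*} (f : ZMod m → V)
    (h : ∀ j, f (j + 1) = f j) : ∀ j, f j = f 0 := by
  have key : ∀ k : ℕ, f (k : ZMod m) = f 0 := by
    intro k; induction k with
    | zero => simp
    | succ k ih => rw [Nat.cast_succ, h, ih]
  intro j
  have := key j.val
  rwa [ZMod.natCast_val, ZMod.cast_id] at this

/-- Proposition 2.3: if `q` is a closed `(K,T)`-Minkowski billiard
trajectory with dual trajectory `p`, then `q` cannot be translated into the interior of `K`
and `p` cannot be translated into the interior of `T`. -/
theorem trajectory_not_translatable {n : ℕ} (K T : Set (Evec n))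
    (hK : IsConvexBody K) (hT : IsConvexBody T)
    (m : ℕ) (q p : ZMod m → Evec n) (h : IsBilliardPair K T m q p) :
    (∀ v : Evec n, ∃ j, q j + v ∉ interior K) ∧
    (∀ v : Evec n, ∃ j, p j + v ∉ interior T) := by
  obtain ⟨⟨hm2, hqne, _⟩, hqK, hpT, hdyn⟩ := h
  haveI : NeZero m := ⟨by omega⟩
  have hTsub : ∀ j, p j ∈ T := fun j =>
    hT.1.isClosed.closure_eq ▸ frontier_subset_closure (hpT j)
  constructor
  · -- q cannot be translated into interior K
    intro v
    by_contra hcon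
    push_neg at hcon
    -- each ⟪p(j+1) - p j, v⟫ ≥ 0
    have hle : ∀ j, (0 : ℝ) ≤ ⟪p (j + 1) - p j, v⟫ := by
      intro j
      have h1 := (hdyn j).2 (q (j + 1) + v) (interior_subset (hcon (j + 1)))
      have h2 : ⟪-(p (j + 1) - p j), v⟫ ≤ 0 := by
        simpa [add_sub_cancel_left] using h1
      rw [inner_neg_left] at h2; linarith
    have hsum : ∑ j : ZMod m, ⟪p (j + 1) - p j, v⟫ = 0 := by
      have : ∀ j : ZMod m, ⟪p (j + 1) - p j, v⟫ = ⟪p (j + 1), v⟫ - ⟪p j, v⟫ := by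
        intro j; rw [inner_sub_left]
      rw [Finset.sum_congr rfl (fun j _ => this j), Finset.sum_sub_distrib,
        sum_shift (fun j => ⟪p j, v⟫), sub_self]
    have hzero : ∀ j : ZMod m, ⟪p (j + 1) - p j, v⟫ = 0 := by
      intro j
      have := (Finset.sum_eq_zero_iff_of_nonneg
        (fun j _ => hle j)).mp hsum j (Finset.mem_univ j)
      exact this
    -- hence p is constant
    have hpconst : ∀ j, p (j + 1) = p j := by
      intro j
      by_contra hne
      have hu0 : -(p (j + 1) - p j) ≠ 0 := by
        simp only [neg_ne_zero]; exact sub_ne_zero.mpr hne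
      have := normal_strict (hdyn j).2 hu0 (hcon (j + 1))
      rw [add_sub_cancel_left, inner_neg_left] at this
      have := hzero j; linarith
    have hp0 : ∀ j, p j = p 0 := zmod_const p hpconst
    -- all edge vectors of q lie in the normal cone at p 0
    have hN : ∀ j : ZMod m, q (j + 1) - q j ∈ outerNormalCone T (p 0) := by
      intro j; rw [← hp0 j]; exact (hdyn j).1
    -- their sum is zero, so - (q 1 - q 0) also lies in the cone
    set f : ZMod m → Evec n := fun j => q (j + 1) - q j with hf
    have hsum0 : ∑ j : ZMod m, f j = 0 := by
      have : ∀ j : ZMod m, f j = q (j + 1) - q j := fun _ => rfl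
      rw [Finset.sum_congr rfl (fun j _ => this j), Finset.sum_sub_distrib,
        sum_shift q, sub_self]
    have herase : ∑ j ∈ Finset.univ.erase (0 : ZMod m), f j = -f 0 := by
      have h := Finset.add_sum_erase Finset.univ f (Finset.mem_univ (0 : ZMod m))
      rw [hsum0] at h
      exact eq_neg_of_add_eq_zero_right h
    have hneg : -f 0 ∈ outerNormalCone T (p 0) := by
      intro y hy
      rw [← herase, sum_inner]
      exact Finset.sum_nonpos fun j _ => hN j y hy
    have hne0 : f 0 ≠ 0 := sub_ne_zero.mpr (hqne 0)
    have h1 := normal_strict (hN 0) hne0 hT.2.2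
    have h2 := normal_strict hneg (by simpa using hne0) hT.2.2
    rw [inner_neg_left] at h2
    linarith
  · -- p cannot be translated into interior T
    intro v
    by_contra hcon
    push_neg at hcon
    have hlt : ∀ j : ZMod m, ⟪q (j + 1) - q j, v⟫ < 0 := by
      intro j
      have hne : q (j + 1) - q j ≠ 0 := sub_ne_zero.mpr (hqne j)
      have := normal_strict (hdyn j).1 hne (hcon j)
      rwa [add_sub_cancel_left] at this
    have hsum : ∑ j : ZMod m, ⟪q (j + 1) - q j, v⟫ = 0 := by
      have : ∀ j : ZMod m, ⟪q (j + 1) - q j, v⟫ = ⟪q (j + 1), v⟫ - ⟪q j, v⟫ := by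
        intro j; rw [inner_sub_left]
      rw [Finset.sum_congr rfl (fun j _ => this j), Finset.sum_sub_distrib,
        sum_shift (fun j => ⟪q j, v⟫), sub_self]
    have hne : (Finset.univ : Finset (ZMod m)).Nonempty := Finset.univ_nonempty
    have := Finset.sum_neg (fun j _ => hlt j) hne
    linarith
end
end

section
/- Let K, T ⊂ ℝ^n be convex bodies. Then every closed strong (K,T)-Minkowski billiard trajectory is a closed weak (K,T)-Minkowski billiard trajectory; and if T is additionally strictly convex, then every closed weak (K,T)-Minkowski billiard trajectory is a closed strong (K,T)-Minkowski billiard trajectory. -/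
open scoped RealInnerProductSpace
open MeasureTheory Filter Metric

noncomputable section

/-- A closed weak `(K,T)`-Minkowski billiard trajectory: a closed polygonal curve on `∂K`
such that each vertex `q_j` minimizes `μ_{T°}(q̄ - q_{j-1}) + μ_{T°}(q_{j+1} - q̄)` over all
`q̄` in some `K`-supporting hyperplane `H_j` through `q_j`. -/
def IsWeakTrajectory {n : ℕ} (K T : Set (Evec n)) (m : ℕ) (q : ZMod m → Evec n) : Prop :=
  IsClosedPolygonal m q ∧ (∀ j, q j ∈ frontier K) ∧
    ∀ j, ∃ u : Evec n, u ≠ 0 ∧ (∀ y ∈ K, ⟪u, y⟫ ≤ ⟪u, q j⟫) ∧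
      ∀ y : Evec n, ⟪u, y⟫ = ⟪u, q j⟫ →
        gauge (polarSet T) (q j - q (j - 1)) + gauge (polarSet T) (q (j + 1) - q j) ≤
          gauge (polarSet T) (y - q (j - 1)) + gauge (polarSet T) (q (j + 1) - y)


section AuxiliaryLemmas

open scoped Pointwise

variable {n : ℕ} {K T : Set (Evec n)}

private lemma zero_mem_body (hT : IsConvexBody T) : (0 : Evec n) ∈ T :=
  interior_subset hT.2.2

private lemma body_mem_of_frontier (hT : IsConvexBody T) {p : Evec n} (hp : p ∈ frontier T) :
    p ∈ T := by
  have := frontier_subset_closure hp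
  rwa [hT.1.isClosed.closure_eq] at this

private lemma exists_ball_subset_body (hT : IsConvexBody T) :
    ∃ ε : ℝ, 0 < ε ∧ ∀ w : Evec n, ‖w‖ < ε → w ∈ T := by
  obtain ⟨ε, hε, h⟩ := Metric.mem_nhds_iff.1 (mem_interior_iff_mem_nhds.1 hT.2.2)
  exact ⟨ε, hε, fun w hw => h (by simpa [Metric.mem_ball, dist_zero_right] using hw)⟩

private lemma inner_pos_of_ne_zero (hT : IsConvexBody T) {v : Evec n} (hv : v ≠ 0) :
    ∃ y ∈ T, 0 < ⟪v, y⟫ := by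
  obtain ⟨ε, hε, hball⟩ := exists_ball_subset_body hT
  have hvn : (0:ℝ) < ‖v‖ := norm_pos_iff.2 hv
  refine ⟨(ε / 2 / ‖v‖) • v, hball _ ?_, ?_⟩
  · rw [norm_smul, Real.norm_eq_abs, abs_of_pos (by positivity)]
    rw [div_mul_cancel₀ _ (ne_of_gt hvn)]
    linarith
  · rw [real_inner_smul_right]
    have : (0:ℝ) < ⟪v, v⟫ := by
      rw [real_inner_self_eq_norm_sq]; positivity
    positivity

private lemma inner_le_gauge (hT : IsConvexBody T) {p : Evec n} (hp : p ∈ T) (v : Evec n) :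
    ⟪v, p⟫ ≤ gauge (polarSet T) v := by
  rcases eq_or_ne v 0 with rfl | hv
  · rw [inner_zero_left]; exact gauge_nonneg _
  · obtain ⟨R, hR⟩ := isBounded_iff_forall_norm_le.1 hT.1.isBounded
    set R' := max R 1 with hR'def
    have hR'pos : (0:ℝ) < R' := lt_of_lt_of_le one_pos (le_max_right _ _)
    have hR' : ∀ y ∈ T, ‖y‖ ≤ R' := fun y hy => (hR y hy).trans (le_max_left _ _)
    have hvn : (0:ℝ) < ‖v‖ := norm_pos_iff.2 hv
    have hne : {r : ℝ | 0 < r ∧ v ∈ r • polarSet T}.Nonempty := by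
      refine ⟨R' * ‖v‖, by positivity, ?_⟩
      rw [Set.mem_smul_set_iff_inv_smul_mem₀ (by positivity)]
      intro y hy
      rw [real_inner_smul_left]
      have h1 : ⟪v, y⟫ ≤ ‖v‖ * R' := by
        calc ⟪v, y⟫ ≤ ‖v‖ * ‖y‖ := real_inner_le_norm v y
          _ ≤ ‖v‖ * R' := by nlinarith [hR' y hy, norm_nonneg v]
      rw [inv_mul_le_iff₀ (by positivity)]
      nlinarith
    refine le_csInf hne ?_
    rintro r ⟨hr, x, hx, rfl⟩
    rw [real_inner_smul_left]
    have := hx p hp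
    nlinarith

private lemma gauge_le_inner (hT : IsConvexBody T) {p : Evec n} (hp : p ∈ T)
    {v : Evec n} (hmax : ∀ y ∈ T, ⟪v, y⟫ ≤ ⟪v, p⟫) :
    gauge (polarSet T) v ≤ ⟪v, p⟫ := by
  have h0 : (0:ℝ) ≤ ⟪v, p⟫ := by
    have := hmax 0 (zero_mem_body hT)
    rwa [inner_zero_right] at this
  rcases h0.eq_or_lt with h | h
  · have hv : v = 0 := by
      by_contra hv
      obtain ⟨y, hy, hpos⟩ := inner_pos_of_ne_zero hT hv
      have := hmax y hy
      rw [← h] at this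
      linarith
    rw [hv, gauge_zero, inner_zero_left]
  · refine gauge_le_of_mem h0 ?_
    rw [Set.mem_smul_set_iff_inv_smul_mem₀ (ne_of_gt h)]
    intro y hy
    rw [real_inner_smul_left, inv_mul_le_iff₀ h]
    have := hmax y hy
    linarith

private lemma gauge_eq_inner (hT : IsConvexBody T) {p : Evec n} (hp : p ∈ T)
    {v : Evec n} (hmax : ∀ y ∈ T, ⟪v, y⟫ ≤ ⟪v, p⟫) :
    gauge (polarSet T) v = ⟪v, p⟫ :=
  le_antisymm (gauge_le_inner hT hp hmax) (inner_le_gauge hT hp v)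

private lemma exists_max (hT : IsConvexBody T) (v : Evec n) :
    ∃ p ∈ T, ∀ y ∈ T, ⟪v, y⟫ ≤ ⟪v, p⟫ := by
  obtain ⟨p, hp, hmax⟩ := hT.1.exists_isMaxOn ⟨0, zero_mem_body hT⟩
    ((continuous_const.inner continuous_id).continuousOn :
      ContinuousOn (fun y : Evec n => ⟪v, y⟫) T)
  exact ⟨p, hp, fun y hy => hmax hy⟩

private lemma max_unique (hT : IsConvexBody T) (hS : StrictConvex ℝ T) {v : Evec n} (hv : v ≠ 0)
    {p p' : Evec n} (hp : p ∈ T) (hp' : p' ∈ T)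
    (hmax : ∀ y ∈ T, ⟪v, y⟫ ≤ ⟪v, p⟫) (hmax' : ∀ y ∈ T, ⟪v, y⟫ ≤ ⟪v, p'⟫) : p = p' := by
  by_contra hne
  have hmem : (1/2 : ℝ) • p + (1/2 : ℝ) • p' ∈ interior T :=
    hS hp hp' hne (by norm_num) (by norm_num) (by norm_num)
  set m := (1/2 : ℝ) • p + (1/2 : ℝ) • p' with hm
  obtain ⟨ε, hε, hball⟩ := Metric.mem_nhds_iff.1 (mem_interior_iff_mem_nhds.1 hmem)
  have hvn : (0:ℝ) < ‖v‖ := norm_pos_iff.2 hv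
  have hyT : m + (ε / 2 / ‖v‖) • v ∈ T := by
    apply hball
    rw [Metric.mem_ball, dist_eq_norm, add_sub_cancel_left, norm_smul, Real.norm_eq_abs,
      abs_of_pos (by positivity), div_mul_cancel₀ _ (ne_of_gt hvn)]
    linarith
  have heq : ⟪v, p'⟫ = ⟪v, p⟫ := le_antisymm (hmax p' hp') (hmax' p hp)
  have hfin := hmax _ hyT
  rw [inner_add_right, real_inner_smul_right, hm, inner_add_right, real_inner_smul_right,
    real_inner_smul_right, heq] at hfin
  have hvv : (0:ℝ) < ⟪v, v⟫ := by rw [real_inner_self_eq_norm_sq]; positivity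
  have hcpos : (0:ℝ) < ε / 2 / ‖v‖ := by positivity
  nlinarith

private lemma max_mem_frontier (hT : IsConvexBody T) {v : Evec n} (hv : v ≠ 0)
    {p : Evec n} (hp : p ∈ T) (hmax : ∀ y ∈ T, ⟪v, y⟫ ≤ ⟪v, p⟫) : p ∈ frontier T := by
  rw [hT.1.isClosed.frontier_eq]
  refine ⟨hp, fun hint => ?_⟩
  obtain ⟨ε, hε, hball⟩ := Metric.mem_nhds_iff.1 (mem_interior_iff_mem_nhds.1 hint)
  have hvn : (0:ℝ) < ‖v‖ := norm_pos_iff.2 hv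
  have hyT : p + (ε / 2 / ‖v‖) • v ∈ T := by
    apply hball
    rw [Metric.mem_ball, dist_eq_norm, add_sub_cancel_left, norm_smul, Real.norm_eq_abs,
      abs_of_pos (by positivity), div_mul_cancel₀ _ (ne_of_gt hvn)]
    linarith
  have hfin := hmax _ hyT
  rw [inner_add_right, real_inner_smul_right] at hfin
  have hvv : (0:ℝ) < ⟪v, v⟫ := by rw [real_inner_self_eq_norm_sq]; positivity
  have hcpos : (0:ℝ) < ε / 2 / ‖v‖ := by positivity
  nlinarith

private lemma near_max (hT : IsConvexBody T) (hS : StrictConvex ℝ T) {v : Evec n} (hv : v ≠ 0)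
    {p : Evec n} (hp : p ∈ T) (hmax : ∀ y ∈ T, ⟪v, y⟫ ≤ ⟪v, p⟫) {ε : ℝ} (hε : 0 < ε) :
    ∃ η > (0:ℝ), ∀ y ∈ T, ⟪v, p⟫ - η ≤ ⟪v, y⟫ → ‖y - p‖ < ε := by
  set S := T ∩ {y : Evec n | ε ≤ ‖y - p‖} with hSdef
  have hSc : IsCompact S := hT.1.inter_right
    (isClosed_le continuous_const ((continuous_id.sub continuous_const).norm))
  rcases S.eq_empty_or_nonempty with hSe | hSne
  · refine ⟨1, one_pos, fun y hy _ => ?_⟩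
    by_contra hcon
    have : y ∈ S := ⟨hy, not_lt.1 hcon⟩
    rw [hSe] at this
    exact this
  · obtain ⟨z, hzS, hzmax⟩ := hSc.exists_isMaxOn hSne
      ((continuous_const.inner continuous_id).continuousOn :
        ContinuousOn (fun y : Evec n => ⟪v, y⟫) S)
    have hzlt : ⟪v, z⟫ < ⟪v, p⟫ := by
      rcases (hmax z hzS.1).lt_or_eq with h | h
      · exact h
      · exfalso
        have hzmaxT : ∀ y ∈ T, ⟪v, y⟫ ≤ ⟪v, z⟫ := fun y hy => (hmax y hy).trans_eq h.symm
        have hzp : z = p := max_unique hT hS hv hzS.1 hp hzmaxT hmax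
        have hε' := hzS.2
        rw [Set.mem_setOf_eq, hzp, sub_self, norm_zero] at hε'
        linarith
    refine ⟨(⟪v, p⟫ - ⟪v, z⟫) / 2, by linarith, fun y hy hclose => ?_⟩
    by_contra hcon
    have hyS : y ∈ S := ⟨hy, not_lt.1 hcon⟩
    have h5 : ⟪v, y⟫ ≤ ⟪v, z⟫ := hzmax hyS
    linarith

private lemma exists_support (hK : IsConvexBody K) {x : Evec n} (hx : x ∈ frontier K) :
    ∃ u : Evec n, u ≠ 0 ∧ ∀ y ∈ K, ⟪u, y⟫ ≤ ⟪u, x⟫ := by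
  have hxi : x ∉ interior K := by
    rw [hK.1.isClosed.frontier_eq] at hx; exact hx.2
  obtain ⟨f, hf⟩ := geometric_hahn_banach_open_point hK.2.1.interior isOpen_interior hxi
  set u := (InnerProductSpace.toDual ℝ (Evec n)).symm f with hu
  have hufy : ∀ y : Evec n, ⟪u, y⟫ = f y := fun y => InnerProductSpace.toDual_symm_apply
  have h0 : (0:ℝ) < f x := by
    have := hf 0 hK.2.2
    simpa using this
  refine ⟨u, ?_, ?_⟩
  · intro h
    have := hufy x
    rw [h, inner_zero_left] at this
    linarith [this ▸ h0]
  · intro y hy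
    rw [hufy, hufy]
    by_contra hlt
    push_neg at hlt
    have hfy : (0:ℝ) < f y := lt_trans h0 hlt
    set t : ℝ := (f y - f x) / (2 * f y) with htdef
    have ht0 : 0 < t := by
      apply div_pos <;> linarith
    have ht1 : t ≤ 1/2 := by
      rw [htdef, div_le_iff₀ (by linarith : (0:ℝ) < 2 * f y)]
      linarith
    have hmem : t • (0 : Evec n) + (1 - t) • y ∈ interior K :=
      hK.2.1.combo_interior_self_mem_interior hK.2.2 hy ht0 (by linarith) (by ring)
    have hcon := hf _ hmem
    rw [smul_zero, zero_add, _root_.map_smul, smul_eq_mul] at hcon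
    have hkey : (1 - t) * f y = (f y + f x) / 2 := by
      rw [htdef]; field_simp; ring
    rw [hkey] at hcon
    linarith

end AuxiliaryLemmas

set_option maxHeartbeats 2000000 in
/-- Theorem 1.3 of [KruppRudolf2022]: every closed strong
`(K,T)`-Minkowski billiard trajectory is a weak one, and if `T` is strictly convex then
every closed weak `(K,T)`-Minkowski billiard trajectory is a strong one. -/
theorem strong_weak_trajectories {n : ℕ} (K T : Set (Evec n))
    (hK : IsConvexBody K) (hT : IsConvexBody T) :
    (∀ (m : ℕ) (q : ZMod m → Evec n), IsClosedTrajectory K T m q → IsWeakTrajectory K T m q) ∧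
    (StrictConvex ℝ T →
      ∀ (m : ℕ) (q : ZMod m → Evec n), IsWeakTrajectory K T m q → IsClosedTrajectory K T m q) := by
  constructor
  · -- strong implies weak
    rintro m q ⟨p, hpoly, hqF, hpF, hcond⟩
    have hpT : ∀ i, p i ∈ T := fun i => body_mem_of_frontier hT (hpF i)
    refine ⟨hpoly, hqF, fun j => ?_⟩
    have hc1 : ∀ i : ZMod m, ∀ y ∈ T, ⟪q (i+1) - q i, y⟫ ≤ ⟪q (i+1) - q i, p i⟫ := by
      intro i y hy
      have := (hcond i).1 y hy
      rwa [inner_sub_right, sub_nonpos] at this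
    have hg : ∀ i : ZMod m, gauge (polarSet T) (q (i+1) - q i) = ⟪q (i+1) - q i, p i⟫ :=
      fun i => gauge_eq_inner hT (hpT i) (hc1 i)
    have hidx : (j - 1 + 1 : ZMod m) = j := by ring
    have hKcone : ∀ y ∈ K, ⟪p (j-1) - p j, y - q j⟫ ≤ 0 := by
      intro y hy
      have h2 := (hcond (j-1)).2
      rw [hidx] at h2
      have := h2 y hy
      rwa [neg_sub] at this
    have min_of : ∀ y : Evec n, ⟪p (j-1) - p j, y - q j⟫ = 0 →
        gauge (polarSet T) (q j - q (j-1)) + gauge (polarSet T) (q (j+1) - q j) ≤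
          gauge (polarSet T) (y - q (j-1)) + gauge (polarSet T) (q (j+1) - y) := by
      intro y h0
      have e1 : gauge (polarSet T) (q j - q (j-1)) = ⟪q j - q (j-1), p (j-1)⟫ := by
        have := hg (j-1)
        rwa [hidx] at this
      have e2 := hg j
      have i1 : ⟪y - q (j-1), p (j-1)⟫ ≤ gauge (polarSet T) (y - q (j-1)) :=
        inner_le_gauge hT (hpT (j-1)) _
      have i2 : ⟪q (j+1) - y, p j⟫ ≤ gauge (polarSet T) (q (j+1) - y) :=
        inner_le_gauge hT (hpT j) _
      rw [e1, e2]
      have expand : ⟪p (j-1) - p j, y - q j⟫ =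
          (⟪y - q (j-1), p (j-1)⟫ + ⟪q (j+1) - y, p j⟫) -
          (⟪q j - q (j-1), p (j-1)⟫ + ⟪q (j+1) - q j, p j⟫) := by
        simp only [inner_sub_left, inner_sub_right]
        rw [real_inner_comm (p (j-1)) y, real_inner_comm (p j) y,
          real_inner_comm (p (j-1)) (q j), real_inner_comm (p j) (q j)]
        ring
      rw [expand] at h0
      linarith
    by_cases h0 : p (j-1) - p j = 0
    · obtain ⟨u, hu, hsupp⟩ := exists_support hK (hqF j)
      exact ⟨u, hu, hsupp, fun y _ => min_of y (by rw [h0, inner_zero_left])⟩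
    · refine ⟨p (j-1) - p j, h0, fun y hy => ?_, fun y hy => ?_⟩
      · have := hKcone y hy
        rwa [inner_sub_right, sub_nonpos] at this
      · exact min_of y (by rw [inner_sub_right, hy, sub_self])
  · -- weak implies strong (T strictly convex)
    intro hS m q hq
    obtain ⟨hpoly, hqF, hweak⟩ := hq
    have hqK : ∀ i, q i ∈ K := fun i => body_mem_of_frontier hK (hqF i)
    have hvne : ∀ i : ZMod m, q (i+1) - q i ≠ 0 := fun i => sub_ne_zero.2 (hpoly.2.1 i)
    choose p hpT hpmax using fun i : ZMod m => exists_max hT (q (i+1) - q i)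
    refine ⟨p, hpoly, hqF,
      fun i => max_mem_frontier hT (hvne i) (hpT i) (hpmax i), fun j => ⟨?_, ?_⟩⟩
    · intro y hy
      rw [inner_sub_right, sub_nonpos]
      exact hpmax j y hy
    · -- -(p (j+1) - p j) ∈ outerNormalCone K (q (j+1))
      obtain ⟨u, hu, hsupp, hmin⟩ := hweak (j + 1)
      have hidx : (j + 1 - 1 : ZMod m) = j := by ring
      simp only [hidx] at hsupp hmin
      have hmax1 := hpmax j
      have hpT1 := hpT j
      have hmax2 := hpmax (j+1)
      have hpT2 := hpT (j+1)
      have hv1ne := hvne j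
      have hv2ne := hvne (j+1)
      set v1 : Evec n := q (j+1) - q j with hv1
      set v2 : Evec n := q (j+1+1) - q (j+1) with hv2
      set g : Evec n := p j - p (j+1) with hg
      -- Step A: orthogonal components of g vanish
      have hA : ∀ w : Evec n, ⟪u, w⟫ = 0 → 0 ≤ ⟪w, g⟫ := by
        intro w hw
        by_contra hneg
        push_neg at hneg
        set δ : ℝ := -⟪w, g⟫ with hδ
        have hδpos : 0 < δ := by rw [hδ]; linarith
        obtain ⟨R, hR⟩ := isBounded_iff_forall_norm_le.1 hT.1.isBounded
        set M : ℝ := ‖w‖ * max R 0 + 1 with hM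
        have hMpos : (0:ℝ) < M := by positivity
        have hMbound : ∀ y ∈ T, |⟪w, y⟫| ≤ M := by
          intro y hy
          calc |⟪w, y⟫| ≤ ‖w‖ * ‖y‖ := abs_real_inner_le_norm w y
            _ ≤ ‖w‖ * max R 0 := by
              have h1 : ‖y‖ ≤ max R 0 := (hR y hy).trans (le_max_left _ _)
              nlinarith [norm_nonneg w]
            _ ≤ M := by rw [hM]; linarith
        set ε : ℝ := δ / (4 * (‖w‖ + 1)) with hε
        have hεpos : 0 < ε := by positivity
        obtain ⟨η₁, hη₁, hn1⟩ := near_max hT hS hv1ne hpT1 hmax1 hεpos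
        obtain ⟨η₂, hη₂, hn2⟩ := near_max hT hS hv2ne hpT2 hmax2 hεpos
        set t : ℝ := min η₁ η₂ / (2 * M) with ht
        have hminpos : 0 < min η₁ η₂ := lt_min hη₁ hη₂
        have htpos : 0 < t := div_pos hminpos (by positivity)
        have h2tM : 2 * t * M = min η₁ η₂ := by
          rw [ht]; field_simp
        have hyH : ⟪u, q (j+1) + t • w⟫ = ⟪u, q (j+1)⟫ := by
          rw [inner_add_right, real_inner_smul_right, hw]; ring
        have hminy := hmin _ hyH
        have hrw1 : q (j+1) + t • w - q j = v1 + t • w := by rw [hv1]; abel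
        have hrw2 : q (j+1+1) - (q (j+1) + t • w) = v2 - t • w := by rw [hv2]; abel
        rw [hrw1, hrw2] at hminy
        obtain ⟨a, haT, hamax⟩ := exists_max hT (v1 + t • w)
        obtain ⟨b, hbT, hbmax⟩ := exists_max hT (v2 - t • w)
        rw [gauge_eq_inner hT haT hamax, gauge_eq_inner hT hbT hbmax,
          gauge_eq_inner hT hpT1 hmax1, gauge_eq_inner hT hpT2 hmax2] at hminy
        simp only [inner_add_left, inner_sub_left, real_inner_smul_left] at hminy
        have ha1 : ⟪v1, a⟫ ≤ ⟪v1, p j⟫ := hmax1 a haT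
        have hb1 : ⟪v2, b⟫ ≤ ⟪v2, p (j+1)⟫ := hmax2 b hbT
        have hwa := abs_le.1 (hMbound a haT)
        have hwb := abs_le.1 (hMbound b hbT)
        have bwa1 : -(t*M) ≤ t * ⟪w, a⟫ := by nlinarith [htpos.le, hwa.1]
        have bwa2 : t * ⟪w, a⟫ ≤ t*M := by nlinarith [htpos.le, hwa.2]
        have bwb1 : -(t*M) ≤ t * ⟪w, b⟫ := by nlinarith [htpos.le, hwb.1]
        have bwb2 : t * ⟪w, b⟫ ≤ t*M := by nlinarith [htpos.le, hwb.2]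
        have hmin1 : min η₁ η₂ ≤ η₁ := min_le_left _ _
        have hmin2 : min η₁ η₂ ≤ η₂ := min_le_right _ _
        have hna : ⟪v1, p j⟫ - η₁ ≤ ⟪v1, a⟫ := by linarith
        have hnb : ⟪v2, p (j+1)⟫ - η₂ ≤ ⟪v2, b⟫ := by linarith
        have hclose_a : ‖a - p j‖ < ε := hn1 a haT hna
        have hclose_b : ‖b - p (j+1)‖ < ε := hn2 b hbT hnb
        have hwab : 0 ≤ ⟪w, a⟫ - ⟪w, b⟫ := by
          by_contra hcon
          push_neg at hcon
          nlinarith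
        have hfa : ⟪w, a - p j⟫ ≤ ‖w‖ * ε := by
          have h1 := real_inner_le_norm w (a - p j)
          nlinarith [norm_nonneg w, norm_nonneg (a - p j)]
        have hfb : -(‖w‖ * ε) ≤ ⟪w, b - p (j+1)⟫ := by
          have h1 := abs_le.1 (abs_real_inner_le_norm w (b - p (j+1)))
          nlinarith [norm_nonneg w, norm_nonneg (b - p (j+1))]
        have hexp : ⟪w, a⟫ - ⟪w, b⟫ = ⟪w, g⟫ + ⟪w, a - p j⟫ - ⟪w, b - p (j+1)⟫ := by
          rw [hg]
          simp only [inner_sub_right]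
          ring
        have hεeq : δ = 4 * (‖w‖ + 1) * ε := by
          rw [hε]; field_simp
        nlinarith [norm_nonneg w, hεpos]
      have hA2 : ∀ w : Evec n, ⟪u, w⟫ = 0 → ⟪w, g⟫ = 0 := by
        intro w hw
        refine le_antisymm ?_ (hA w hw)
        have := hA (-w) (by rw [inner_neg_right, hw, neg_zero])
        rw [inner_neg_left] at this
        linarith
      have huu : (0:ℝ) < ⟪u, u⟫ := by
        rw [real_inner_self_eq_norm_sq]
        have : (0:ℝ) < ‖u‖ := norm_pos_iff.2 hu
        positivity
      set c : ℝ := ⟪u, g⟫ / ⟪u, u⟫ with hc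
      have hcol : g = c • u := by
        have hw0 : ⟪u, g - c • u⟫ = 0 := by
          have hmul : c * ⟪u, u⟫ = ⟪u, g⟫ := by
            rw [hc, div_mul_cancel₀ _ (ne_of_gt huu)]
          rw [inner_sub_right, real_inner_smul_right, hmul, sub_self]
        have h1 := hA2 _ hw0
        have h2 : ⟪g - c • u, g - c • u⟫ = 0 := by
          rw [inner_sub_right, h1, real_inner_smul_right, ← real_inner_comm (g - c • u) u, hw0]
          ring
        have := inner_self_eq_zero.1 h2
        rw [sub_eq_zero] at this
        exact this
      have hside : 0 ≤ ⟪u, v1⟫ := by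
        have := hsupp (q j) (hqK j)
        rw [hv1, inner_sub_right]
        linarith
      rcases hside.lt_or_eq with hposn | hzero
      · -- generic case : q j strictly inside the halfspace
        have hv1g : 0 ≤ ⟪v1, g⟫ := by
          rw [hg, inner_sub_right, sub_nonneg]
          exact hmax1 (p (j+1)) hpT2
        have hcn : 0 ≤ c := by
          rw [hcol, real_inner_smul_right, ← real_inner_comm v1 u] at hv1g
          by_contra hcneg
          push_neg at hcneg
          nlinarith [mul_pos (neg_pos.2 hcneg) hposn]
        intro y hy
        have hy1 : ⟪u, y - q (j+1)⟫ ≤ 0 := by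
          rw [inner_sub_right]
          exact sub_nonpos.2 (hsupp y hy)
        have : -(p (j+1) - p j) = g := by rw [hg]; abel
        rw [this, hcol, real_inner_smul_left]
        exact mul_nonpos_of_nonneg_of_nonpos hcn hy1
      · -- degenerate case : q j lies on the hyperplane
        have hqjH : ⟪u, q j⟫ = ⟪u, q (j+1)⟫ := by
          rw [hv1, inner_sub_right] at hzero
          linarith
        have hminj := hmin (q j) hqjH
        rw [sub_self, gauge_zero] at hminj
        have hsum : q (j+1+1) - q j = v1 + v2 := by rw [hv1, hv2]; abel
        rw [hsum, gauge_eq_inner hT hpT1 hmax1, gauge_eq_inner hT hpT2 hmax2] at hminj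
        by_cases hvv : v1 + v2 = 0
        · exfalso
          rw [hvv, gauge_zero] at hminj
          obtain ⟨y, hy, hypos⟩ := inner_pos_of_ne_zero hT hv1ne
          have l1 : ⟪v1, y⟫ ≤ ⟪v1, p j⟫ := hmax1 y hy
          have l2 : (0:ℝ) ≤ ⟪v2, p (j+1)⟫ := by
            have := hmax2 0 (zero_mem_body hT)
            rwa [inner_zero_right] at this
          linarith
        · obtain ⟨ps, hpsT, hpsmax⟩ := exists_max hT (v1 + v2)
          rw [gauge_eq_inner hT hpsT hpsmax, inner_add_left] at hminj
          have b1 : ⟪v1, ps⟫ ≤ ⟪v1, p j⟫ := hmax1 ps hpsT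
          have b2 : ⟪v2, ps⟫ ≤ ⟪v2, p (j+1)⟫ := hmax2 ps hpsT
          have eq1 : ⟪v1, ps⟫ = ⟪v1, p j⟫ := by linarith
          have eq2 : ⟪v2, ps⟫ = ⟪v2, p (j+1)⟫ := by linarith
          have hps1 : p j = ps :=
            max_unique hT hS hv1ne hpT1 hpsT hmax1
              (fun y hy => (hmax1 y hy).trans_eq eq1.symm)
          have hps2 : p (j+1) = ps :=
            max_unique hT hS hv2ne hpT2 hpsT hmax2
              (fun y hy => (hmax2 y hy).trans_eq eq2.symm)
          intro y hy
          rw [hps1, hps2, sub_self, neg_zero, inner_zero_left]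
end
end
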